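/- Let p be an odd prime, n ≥ 1, and G ≤ GL₂(ℤ/pⁿℤ) a group all of whose elements fix (1,0) (i.e., of the form [[1,f],[0,c]] with c a unit). Suppose G is a p-group and is not cyclic. Let i be the largest integer such that every element of G has (2,2)-entry ≡ 1 mod p^i, and suppose [[1,p^e],[0,1]] generates the subgroup of upper unitriangular matrices of G. Then there exists b ∈ ℤ/pⁿℤ such that G is generated by δ = [[1,b],[0,1+p^i]] and σ = [[1,p^e],[0,1]]; furthermore, if p^e divides b, then G is also generated by [[1,0],[0,1+p^i]] and σ. -/

import Mathlib

open Matrix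

-- (1+y)^k ≡ 1 + k y mod y²
lemma st15_L2 (y : ℤ) : ∀ k : ℕ, y^2 ∣ (1+y)^k - (1+(k:ℤ)*y) := by
  intro k
  induction k with
  | zero => simp
  | succ k ih =>
    obtain ⟨w, hw⟩ := ih
    exact ⟨(k:ℤ) + w*(1+y), by push_cast; linear_combination (1+y)*hw⟩

-- binomial step
lemma st15_L1 (p : ℕ) (hp : p.Prime) (h3 : 3 ≤ p) (j : ℕ) (hj : 1 ≤ j) (b : ℤ) :
    ((p:ℤ))^(j+2) ∣ (1 + (p:ℤ)^j*b)^p - (1 + (p:ℤ)^(j+1)*b) := by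
  have hexp : (1+(p:ℤ)^j*b)^p
      = ∑ k ∈ Finset.range (p+1), ((p:ℤ)^j*b)^k * (p.choose k : ℤ) := by
    rw [add_comm, add_pow]; simp
  have hsplit : ∑ k ∈ Finset.range (p+1), ((p:ℤ)^j*b)^k * (p.choose k : ℤ)
      = (∑ k ∈ Finset.Ico 2 (p+1), ((p:ℤ)^j*b)^k * (p.choose k : ℤ))
        + (1 + (p:ℤ)^(j+1)*b) := by
    rw [Finset.range_eq_Ico,
      ← Finset.sum_Ico_consecutive _ (Nat.zero_le 2) (by omega : 2 ≤ p+1)]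
    have : Finset.Ico 0 2 = ({0,1} : Finset ℕ) := by decide
    rw [this]
    simp [Finset.sum_insert, pow_succ]
    ring
  rw [hexp, hsplit, add_sub_cancel_right]
  apply Finset.dvd_sum
  intro k hk
  simp only [Finset.mem_Ico] at hk
  rcases eq_or_lt_of_le (by omega : k + 1 ≤ p + 1) with hkp | hkp
  · -- k = p
    have hkp' : k = p := by omega
    subst hkp'
    have h1 : j + 2 ≤ j * k := by nlinarith
    rw [mul_pow, ← pow_mul]
    exact Dvd.dvd.mul_right (Dvd.dvd.mul_right (pow_dvd_pow _ h1) _) _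
  · -- k < p
    have hkp' : k < p := by omega
    obtain ⟨c, hc⟩ := hp.dvd_choose_self (by omega : k ≠ 0) hkp'
    have hc' : (p.choose k : ℤ) = (p:ℤ) * (c:ℤ) := by exact_mod_cast congrArg Nat.cast hc
    rw [hc', mul_pow, ← pow_mul]
    have h1 : j + 2 ≤ j * k + 1 := by nlinarith
    calc ((p:ℤ))^(j+2) ∣ (p:ℤ)^(j*k+1) := pow_dvd_pow _ h1
      _ = (p:ℤ)^(j*k) * (p:ℤ) := by rw [pow_succ]
      _ ∣ (p:ℤ)^(j*k) * b^k * ((p:ℤ) * c) := ⟨b^k * c, by ring⟩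

-- iterate: c^(p^r) ≡ 1 + p^(i+r) T mod p^(i+r+1)
lemma st15_L3 (p : ℕ) (hp : p.Prime) (h3 : 3 ≤ p) (i : ℕ) (hi : 1 ≤ i) (T : ℤ) :
    ∀ r : ℕ, ((p:ℤ))^(i+r+1) ∣ (1+(p:ℤ)^i*T)^(p^r) - (1 + (p:ℤ)^(i+r)*T) := by
  intro r
  induction r with
  | zero => simp
  | succ r ih =>
    obtain ⟨a, ha⟩ := ih
    have ha' : (1+(p:ℤ)^i*T)^(p^r) = 1 + (p:ℤ)^(i+r)*(T + (p:ℤ)*a) := by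
      linear_combination ha
    have hs := st15_L1 p hp h3 (i+r) (by omega) (T + (p:ℤ)*a)
    obtain ⟨w, hw⟩ := hs
    have hps : (1+(p:ℤ)^i*T)^(p^(r+1)) = ((1+(p:ℤ)^i*T)^(p^r))^p := by
      rw [pow_succ, pow_mul]
    rw [hps, ha']
    exact ⟨w + a, by linear_combination hw⟩

-- main integer lemma
lemma st15_L4 (p : ℕ) (hp : p.Prime) (h3 : 3 ≤ p) (i : ℕ) (hi : 1 ≤ i)
    (T : ℤ) (hT : ¬ (p:ℤ) ∣ T) (S : ℤ) :
    ∀ j : ℕ, ∃ m : ℕ, ((p:ℤ))^j ∣ (1+(p:ℤ)^i*T)^m - (1+(p:ℤ)^i*S) := by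
  intro j
  induction j with
  | zero => exact ⟨0, by simp⟩
  | succ j ih =>
    by_cases hji : j < i
    · refine ⟨0, ?_⟩
      have h := ((pow_dvd_pow (p:ℤ) (by omega : j+1 ≤ i)).mul_right S).neg_right
      simpa using h
    · push_neg at hji
      obtain ⟨m, hm⟩ := ih
      obtain ⟨a, ha⟩ := hm
      haveI := Fact.mk hp
      set k : ℕ := ((-(a : ZMod p)) * ((T:ZMod p))⁻¹).val with hkdef
      have hT0 : ((T : ZMod p)) ≠ 0 := by
        rw [Ne, ZMod.intCast_zmod_eq_zero_iff_dvd]; exact hT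
      have hk : (p:ℤ) ∣ a + (k:ℤ)*T := by
        have : ((a + (k:ℤ)*T : ℤ) : ZMod p) = 0 := by
          push_cast
          rw [hkdef]
          push_cast [ZMod.natCast_val, ZMod.cast_id]
          field_simp
          ring
        rwa [ZMod.intCast_zmod_eq_zero_iff_dvd] at this
      obtain ⟨w, hw⟩ := hk
      refine ⟨m + p^(j-i)*k, ?_⟩
      set c : ℤ := 1+(p:ℤ)^i*T with hc
      have hA : c^(p^(j-i)) ≡ 1 + (p:ℤ)^j*T [ZMOD ((p:ℤ))^(j+1)] := by
        have := st15_L3 p hp h3 i hi T (j-i)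
        rw [(by omega : i + (j-i) = j)] at this
        exact (Int.modEq_iff_dvd.mpr this).symm
      have hB : (1 + (p:ℤ)^j*T)^k ≡ 1 + (k:ℤ)*((p:ℤ)^j*T) [ZMOD ((p:ℤ))^(j+1)] := by
        have h2 := st15_L2 ((p:ℤ)^j*T) k
        have hdd : ((p:ℤ))^(j+1) ∣ ((p:ℤ)^j*T)^2 := by
          have : ((p:ℤ))^(j+1) ∣ ((p:ℤ)^j)^2 := by
            rw [← pow_mul]; exact pow_dvd_pow _ (by omega)
          exact this.trans (by rw [mul_pow]; exact Dvd.intro _ rfl)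
        exact (Int.modEq_iff_dvd.mpr ((hdd.trans h2))).symm
      have hCm : c^m = 1 + (p:ℤ)^i*S + (p:ℤ)^j*a := by linear_combination ha
      have hmul : c^(m + p^(j-i)*k) ≡ (1 + (p:ℤ)^i*S + (p:ℤ)^j*a) * (1 + (k:ℤ)*((p:ℤ)^j*T))
          [ZMOD ((p:ℤ))^(j+1)] := by
        have hsplit : c^(m + p^(j-i)*k) = c^m * (c^(p^(j-i)))^k := by
          rw [pow_add, pow_mul]
        rw [hsplit, hCm]
        exact Int.ModEq.mul_left _ ((hA.pow k).trans hB)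
      have hfin : (1 + (p:ℤ)^i*S + (p:ℤ)^j*a) * (1 + (k:ℤ)*((p:ℤ)^j*T))
          ≡ 1 + (p:ℤ)^i*S [ZMOD ((p:ℤ))^(j+1)] := by
        obtain ⟨i', rfl⟩ : ∃ i', i = i'+1 := ⟨i-1, by omega⟩
        obtain ⟨j', rfl⟩ : ∃ j', j = j'+1 := ⟨j-1, by omega⟩
        refine Int.modEq_iff_dvd.mpr
          ⟨-(w + (p:ℤ)^i'*(k:ℤ)*T*S + (p:ℤ)^j'*(k:ℤ)*T*a), ?_⟩
        linear_combination (-(p:ℤ)^(j'+1)) * hw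
      exact Int.ModEq.dvd ((hmul.trans hfin).symm)

-- ZMod wrapper
lemma st15_key (p : ℕ) (hp : p.Prime) (hodd : Odd p) (n i : ℕ) (hi : 1 ≤ i)
    (t : ZMod (p^n)) (hnz : NeZero (p^n)) (ht : ∀ s, t ≠ (p : ZMod (p^n)) * s) (S : ZMod (p^n)) :
    ∃ m : ℕ, (1 + (p : ZMod (p^n))^i * t)^m = 1 + (p : ZMod (p^n))^i * S := by
  have h3 : 3 ≤ p := by
    have := hp.two_le
    rcases hodd with ⟨k, hk⟩
    omega
  have hT : ¬ (p:ℤ) ∣ (t.val : ℤ) := by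
    intro ⟨w, hw⟩
    apply ht ((w : ZMod (p^n)))
    have : ((t.val : ℤ) : ZMod (p^n)) = (((p:ℤ) * w : ℤ) : ZMod (p^n)) := by rw [hw]
    push_cast at this
    rwa [ZMod.natCast_val, ZMod.cast_id] at this
  obtain ⟨m, hm⟩ := st15_L4 p hp h3 i hi (t.val : ℤ) hT (S.val : ℤ) n
  refine ⟨m, ?_⟩
  have hcast : (((1+(p:ℤ)^i*(t.val:ℤ))^m - (1+(p:ℤ)^i*(S.val:ℤ)) : ℤ) : ZMod (p^n)) = 0 := by
    rw [ZMod.intCast_zmod_eq_zero_iff_dvd]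
    exact_mod_cast hm
  rw [Int.cast_sub] at hcast
  have := sub_eq_zero.mp hcast
  push_cast at this
  rwa [ZMod.natCast_val, ZMod.natCast_val, ZMod.cast_id, ZMod.cast_id] at this

-- matrix power lemma
lemma st15_matpow {R : Type*} [CommRing R] (f c : R) (m : ℕ) :
    ∃ fm : R, (!![1, f; 0, c])^m = !![1, fm; 0, c^m] := by
  induction m with
  | zero => exact ⟨0, by rw [pow_zero, pow_zero, Matrix.one_fin_two]⟩
  | succ m ih =>
    obtain ⟨fm, hfm⟩ := ih
    refine ⟨f + fm*c, ?_⟩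
    rw [pow_succ, hfm, Matrix.mul_fin_two]
    congr 1 <;> ring

lemma st15_matpowU {R : Type*} [CommRing R] (x : R) (k : ℕ) :
    (!![1, x; 0, 1])^k = !![1, (k:R)*x; 0, 1] := by
  induction k with
  | zero => rw [pow_zero, Matrix.one_fin_two]; norm_num
  | succ k ih =>
    rw [pow_succ, ih, Matrix.mul_fin_two]
    push_cast
    congr 1 <;> ring


/-- Lemma 2.2 of the paper: let `p` be an odd prime, `n ≥ 1`, and
`G ≤ GL₂(ℤ/pⁿℤ)` a non-cyclic `p`-group all of whose elements fix `(1,0)` (so they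
are of the form `[[1,f],[0,c]]`).  Let `i` be the largest integer such that every
element of `G` has `(2,2)`-entry `≡ 1 mod pⁱ`, and assume `σ = [[1,pᵉ],[0,1]]`
generates the subgroup of upper unitriangular matrices of `G`.  Then there is
`b ∈ ℤ/pⁿℤ` such that `G = ⟨δ, σ⟩` with `δ = [[1,b],[0,1+pⁱ]]`; moreover if `pᵉ ∣ b`
then also `G = ⟨[[1,0],[0,1+pⁱ]], σ⟩`. -/
theorem statement15 (p : ℕ) (hp : p.Prime) (hodd : Odd p) (n : ℕ) (hn : 1 ≤ n)
    (G : Subgroup (GL (Fin 2) (ZMod (p ^ n))))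
    (hpG : IsPGroup p G) (hnotcyc : ¬ IsCyclic G)
    (hform : ∀ g ∈ G, ∃ f c : ZMod (p ^ n),
      (g : Matrix (Fin 2) (Fin 2) (ZMod (p ^ n))) = !![1, f; 0, c])
    (i : ℕ) (hi1 : 1 ≤ i)
    (hiall : ∀ g ∈ G, ∃ t : ZMod (p ^ n),
      (g : Matrix (Fin 2) (Fin 2) (ZMod (p ^ n))) 1 1 = 1 + (p : ZMod (p ^ n)) ^ i * t)
    (himax : ¬ ∀ g ∈ G, ∃ t : ZMod (p ^ n),
      (g : Matrix (Fin 2) (Fin 2) (ZMod (p ^ n))) 1 1 = 1 + (p : ZMod (p ^ n)) ^ (i + 1) * t)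
    (e : ℕ) (σ : GL (Fin 2) (ZMod (p ^ n))) (hσG : σ ∈ G)
    (hσ : (σ : Matrix (Fin 2) (Fin 2) (ZMod (p ^ n))) = !![1, (p : ZMod (p ^ n)) ^ e; 0, 1])
    (hσgen : ∀ g ∈ G, (g : Matrix (Fin 2) (Fin 2) (ZMod (p ^ n))) 1 1 = 1 →
      g ∈ Subgroup.zpowers σ) :
    ∃ (b : ZMod (p ^ n)) (δ : GL (Fin 2) (ZMod (p ^ n))),
      (δ : Matrix (Fin 2) (Fin 2) (ZMod (p ^ n)))
          = !![1, b; 0, 1 + (p : ZMod (p ^ n)) ^ i] ∧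
      G = Subgroup.closure {δ, σ} ∧
      ((∃ c : ZMod (p ^ n), b = (p : ZMod (p ^ n)) ^ e * c) →
        ∃ δ' : GL (Fin 2) (ZMod (p ^ n)),
          (δ' : Matrix (Fin 2) (Fin 2) (ZMod (p ^ n)))
              = !![1, 0; 0, 1 + (p : ZMod (p ^ n)) ^ i] ∧
          G = Subgroup.closure {δ', σ}) := by
  haveI : NeZero (p ^ n) := ⟨pow_ne_zero n hp.pos.ne'⟩
  set R := ZMod (p ^ n)
  push_neg at himax
  obtain ⟨g, hgG, hgmax⟩ := himax
  obtain ⟨f, c, hgmat⟩ := hform g hgG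
  obtain ⟨t, hgt⟩ := hiall g hgG
  have hc : c = 1 + (p : R)^i * t := by rw [hgmat] at hgt; simpa using hgt
  have ht : ∀ s, t ≠ (p : R) * s := by
    intro s hs
    apply hgmax s
    rw [hgmat]
    have : (!![1, f; 0, c] : Matrix (Fin 2) (Fin 2) R) 1 1 = c := by simp
    rw [this, hc, hs]; ring
  obtain ⟨m, hm⟩ := st15_key p hp hodd n i hi1 t ‹NeZero (p^n)› ht 1
  set δ := g ^ m with hδdef
  have hδG : δ ∈ G := pow_mem hgG m
  obtain ⟨b, hb⟩ := st15_matpow f c m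
  have hδmat : (δ : Matrix (Fin 2) (Fin 2) R) = !![1, b; 0, 1 + (p : R)^i] := by
    have h1 : (δ : Matrix (Fin 2) (Fin 2) R) = (↑g)^m := Units.val_pow_eq_pow_val g m
    rw [h1, hgmat, hb, hc, hm, mul_one]
  -- one is not p * s
  have hone : ∀ s : R, (1 : R) ≠ (p : R) * s := by
    intro s h1
    have hu : IsUnit ((p : ℕ) : ZMod (p^n)) := IsUnit.of_mul_eq_one s h1.symm
    rw [ZMod.isUnit_iff_coprime] at hu
    have hdvd : p ∣ Nat.gcd p (p^n) := Nat.dvd_gcd dvd_rfl (dvd_pow_self p (by omega))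
    have := hp.two_le
    rw [Nat.Coprime] at hu
    rw [hu] at hdvd
    have := Nat.le_of_dvd one_pos hdvd
    have := hp.two_le
    omega
  -- closure equality
  have hGline : G = Subgroup.closure {δ, σ} := by
    apply le_antisymm
    · intro h hh
      obtain ⟨f', c', hhmat⟩ := hform h hh
      obtain ⟨t', hht⟩ := hiall h hh
      have hc' : c' = 1 + (p : R)^i * t' := by rw [hhmat] at hht; simpa using hht
      obtain ⟨k, hk⟩ := st15_key p hp hodd n i hi1 1 ‹NeZero (p^n)› hone t'
      have hk' : (1 + (p : R)^i)^k = c' := by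
        rw [hc', ← hk]; ring_nf
      obtain ⟨bk, hbk⟩ := st15_matpow b (1 + (p : R)^i) k
      have hδk : ((δ^k : GL (Fin 2) R) : Matrix (Fin 2) (Fin 2) R) = !![1, bk; 0, c'] := by
        rw [Units.val_pow_eq_pow_val, hδmat, hbk, hk']
      set v := (δ^k)⁻¹ * h with hv
      have hvG : v ∈ G := mul_mem (inv_mem (pow_mem hδG k)) hh
      obtain ⟨fv, cv, hvmat⟩ := hform v hvG
      have hmm : δ^k * v = h := by rw [hv]; group
      have hprod : ((δ^k : GL (Fin 2) R) : Matrix (Fin 2) (Fin 2) R)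
          * (v : Matrix (Fin 2) (Fin 2) R) = (h : Matrix (Fin 2) (Fin 2) R) := by
        rw [← Units.val_mul, hmm]
      rw [hhmat, hδk, hvmat, Matrix.mul_fin_two] at hprod
      have h11 := congrFun (congrFun hprod 1) 1
      simp at h11
      -- h11 : c' = c' * cv  (or similar)
      have hunit : IsUnit c' := by
        have hu : IsUnit (h : Matrix (Fin 2) (Fin 2) R) := h.isUnit
        rw [Matrix.isUnit_iff_isUnit_det, hhmat, Matrix.det_fin_two_of] at hu
        simpa using hu
      have hcv1 : cv = 1 := hunit.mul_left_cancel (by rw [mul_one]; exact h11)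
      have hvz := hσgen v hvG (by rw [hvmat]; simp [hcv1])
      have hδin : δ ∈ Subgroup.closure {δ, σ} :=
        Subgroup.subset_closure (Set.mem_insert _ _)
      have hσin : σ ∈ Subgroup.closure {δ, σ} :=
        Subgroup.subset_closure (Set.mem_insert_of_mem _ rfl)
      have hvin : v ∈ Subgroup.closure {δ, σ} := (Subgroup.zpowers_le.mpr hσin) hvz
      have heq : h = δ^k * v := by rw [hv]; group
      rw [heq]
      exact mul_mem (pow_mem hδin k) hvin
    · rw [Subgroup.closure_le]
      intro x hx
      simp only [Set.mem_insert_iff, Set.mem_singleton_iff] at hx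
      rcases hx with rfl | rfl
      exacts [hδG, hσG]
  refine ⟨b, δ, hδmat, hGline, ?_⟩
  rintro ⟨c0, hc0⟩
  set k0 := c0.val with hk0
  have hσinv : ((σ⁻¹ : GL (Fin 2) R) : Matrix (Fin 2) (Fin 2) R)
      = !![1, -(p : R)^e; 0, 1] := by
    rw [Matrix.coe_units_inv, hσ]
    apply Matrix.inv_eq_right_inv
    rw [Matrix.mul_fin_two, Matrix.one_fin_two]
    congr 1 <;> ring
  have hσik : ((σ⁻¹^k0 : GL (Fin 2) R) : Matrix (Fin 2) (Fin 2) R)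
      = !![1, (k0 : R) * (-(p : R)^e); 0, 1] := by
    rw [Units.val_pow_eq_pow_val, hσinv, st15_matpowU]
  refine ⟨δ * σ⁻¹^k0, ?_, ?_⟩
  · rw [Units.val_mul, hδmat, hσik, Matrix.mul_fin_two]
    have hcast : (k0 : R) = c0 := by rw [hk0, ZMod.natCast_val, ZMod.cast_id]
    rw [hcast, hc0]
    congr 1 <;> ring
  · have hδ'G : δ * σ⁻¹^k0 ∈ G := mul_mem hδG (pow_mem (inv_mem hσG) k0)
    apply le_antisymm
    · rw [hGline, Subgroup.closure_le]
      intro x hx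
      simp only [Set.mem_insert_iff, Set.mem_singleton_iff] at hx
      have hδ'in : δ * σ⁻¹^k0 ∈ Subgroup.closure {δ * σ⁻¹^k0, σ} :=
        Subgroup.subset_closure (Set.mem_insert _ _)
      have hσin : σ ∈ Subgroup.closure {δ * σ⁻¹^k0, σ} :=
        Subgroup.subset_closure (Set.mem_insert_of_mem _ rfl)
      rcases hx with rfl | rfl
      · have heq : (δ * σ⁻¹^k0) * σ^k0 = δ := by group
        have h2 := mul_mem hδ'in (pow_mem hσin k0)
        rwa [heq] at h2
      · exact hσin
    · rw [Subgroup.closure_le]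
      intro x hx
      simp only [Set.mem_insert_iff, Set.mem_singleton_iff] at hx
      rcases hx with rfl | rfl
      exacts [hδ'G, hσG]
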